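/- For all k, d ∈ ℕ⁺, Q_max(2k, d) ≤ k^d. Consequently, for every even n with n < 2^d, Q_max(n,d) < n^{d−1}. -/
import Mathlib


/-- A point `q` lies on the `(n,d)`-board, i.e. all coordinates are in `{1,…,n}`. -/
def onBoard (n d : ℕ) (q : Fin d → ℕ) : Prop :=
  ∀ i, 1 ≤ q i ∧ q i ≤ n

/-- Queen `a` attacks queen `b`: there are an integer `m` and a nonzero vector
`ε ∈ {-1,0,1}^d` with `a i = ε i * m + b i` for all `i`. -/
def attacks {d : ℕ} (a b : Fin d → ℕ) : Prop :=
  ∃ (m : ℤ) (ε : Fin d → ℤ), (∀ i, ε i = -1 ∨ ε i = 0 ∨ ε i = 1) ∧ ε ≠ 0 ∧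
    ∀ i, (a i : ℤ) = ε i * m + (b i : ℤ)

/-- A set of queens is non-attacking if no two distinct members attack each other. -/
def nonAttacking {d : ℕ} (Q : Finset (Fin d → ℕ)) : Prop :=
  ∀ a ∈ Q, ∀ b ∈ Q, a ≠ b → ¬ attacks a b

/-- A partial solution on the `(n,d)`-board: a non-attacking set fitting the board. -/
def isPartial (n d : ℕ) (Q : Finset (Fin d → ℕ)) : Prop :=
  (∀ q ∈ Q, onBoard n d q) ∧ nonAttacking Q

/-- A solution to the `(n,d)`-queens problem: a non-attacking set of `n^(d-1)` queens. -/
def isSolution (n d : ℕ) (Q : Finset (Fin d → ℕ)) : Prop :=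
  isPartial n d Q ∧ Q.card = n ^ (d - 1)

/-- The `(n,d)`-board as a finite set. -/
def boardFinset (n d : ℕ) : Finset (Fin d → ℕ) :=
  Fintype.piFinset fun _ => Finset.Icc 1 n

/-- `Qmax n d` : the maximum cardinality of a non-attacking set on the `(n,d)`-board. -/
noncomputable def Qmax (n d : ℕ) : ℕ :=
  sSup {k | ∃ Q : Finset (Fin d → ℕ), isPartial n d Q ∧ Q.card = k}

/-- `Qmax(2k,d) ≤ k^d`; consequently, for every even `n` with `n < 2^d`,
`Qmax(n,d) < n^(d-1)`. -/
theorem qmax_even_bound (d : ℕ) (hd : 1 ≤ d) :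
    (∀ k : ℕ, 1 ≤ k → Qmax (2 * k) d ≤ k ^ d) ∧
    (∀ n : ℕ, 1 ≤ n → Even n → n < 2 ^ d → Qmax n d < n ^ (d - 1)) := by
  classical
  have card_bound : ∀ k : ℕ, ∀ Q : Finset (Fin d → ℕ),
      isPartial (2 * k) d Q → Q.card ≤ k ^ d := by
    intro k Q hQ
    set f : (Fin d → ℕ) → (Fin d → ℕ) := fun q i => (q i + 1) / 2 with hf
    have hinj : Set.InjOn f Q := by
      intro a ha b hb hab
      by_contra hne
      apply hQ.2 a ha b hb hne
      refine ⟨1, fun i => (a i : ℤ) - b i, ?_, ?_, ?_⟩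
      · intro i
        have h1 := hQ.1 a ha i
        have h2 := hQ.1 b hb i
        have h3 := congrFun hab i
        simp only [hf] at h3
        show (a i : ℤ) - b i = -1 ∨ (a i : ℤ) - b i = 0 ∨ (a i : ℤ) - b i = 1
        omega
      · intro h
        apply hne
        funext i
        have h3 := congrFun h i
        simp only [Pi.zero_apply, sub_eq_zero] at h3
        exact_mod_cast h3
      · intro i; ring
    calc Q.card = (Q.image f).card := (Finset.card_image_of_injOn hinj).symm
      _ ≤ (boardFinset k d).card := by
          apply Finset.card_le_card
          intro q hq
          simp only [Finset.mem_image] at hq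
          obtain ⟨a, ha, rfl⟩ := hq
          simp only [boardFinset, Fintype.mem_piFinset, Finset.mem_Icc, hf]
          intro i
          have := hQ.1 a ha i
          omega
      _ = k ^ d := by
          simp [boardFinset, Fintype.card_piFinset, Nat.card_Icc]
  have key : ∀ k : ℕ, 1 ≤ k → Qmax (2 * k) d ≤ k ^ d := by
    intro k hk
    apply csSup_le
    · exact ⟨0, ∅, ⟨fun q hq => absurd hq (by simp),
        fun a ha => absurd ha (by simp)⟩, rfl⟩
    · rintro x ⟨Q, hQ, rfl⟩
      exact card_bound k Q hQ
  refine ⟨key, ?_⟩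
  intro n hn hev hlt
  obtain ⟨r, rfl⟩ := hev
  have hr : 1 ≤ r := by omega
  have h2r : r + r = 2 * r := by ring
  have h1 : Qmax (r + r) d ≤ r ^ d := by rw [h2r]; exact key r hr
  have hpow : 2 ^ d = 2 * 2 ^ (d - 1) := by
    rw [← pow_succ']
    congr 1
    omega
  have hrlt : r < 2 ^ (d - 1) := by omega
  have h2 : r ^ d < (r + r) ^ (d - 1) := by
    have e1 : r ^ d = r ^ (d - 1) * r := by
      rw [← pow_succ]
      congr 1
      omega
    have e2 : (r + r) ^ (d - 1) = r ^ (d - 1) * 2 ^ (d - 1) := by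
      rw [← mul_pow]
      congr 1
      ring
    rw [e1, e2]
    exact Nat.mul_lt_mul_of_le_of_lt (le_refl _) hrlt (by positivity)
  omega
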